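/- Let r ≥ 1 be an integer and let p ∈ ℝ[X] be a monic polynomial of degree r+1 whose coefficient of X^r equals 0. Suppose p^{(l)}(a) = 0 for every 1 ≤ l ≤ r−1, and suppose p(a) = p(b) for some real b ≠ a. Then b = −r·a (equivalently a = −b/r). -/
import Mathlib


open Polynomial

/-- If `p ∈ ℝ[X]` is monic of degree `r+1` with vanishing coefficient of `X^r`,
`p^{(l)}(a) = 0` for every `1 ≤ l ≤ r-1` and `p(a) = p(b)` for some `b ≠ a`,
then `b = -r·a`. -/
theorem stmt13 (r : ℕ) (hr : 1 ≤ r) (p : Polynomial ℝ)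
    (hmonic : p.Monic) (hdeg : p.natDegree = r + 1) (hcoeff : p.coeff r = 0)
    (a b : ℝ) (hba : b ≠ a)
    (hder : ∀ l : ℕ, 1 ≤ l → l ≤ r - 1 → (derivative^[l] p).eval a = 0)
    (heq : p.eval a = p.eval b) :
    b = -(r : ℝ) * a := by
  set q := taylor a p with hq
  have hqdeg : q.natDegree = r + 1 := by rw [hq, natDegree_taylor, hdeg]
  have hqtop : q.coeff (r + 1) = 1 := by
    have : q.Monic := by
      rw [hq, taylor_apply]
      exact hmonic.comp_X_add_C a
    have := this.coeff_natDegree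
    rwa [hqdeg] at this
  -- middle coefficients vanish
  have hql : ∀ l : ℕ, 1 ≤ l → l ≤ r - 1 → q.coeff l = 0 := by
    intro l h1 h2
    rw [hq, taylor_coeff]
    have hd := hder l h1 h2
    have hs : (Nat.factorial l) • (hasseDeriv l p) = derivative^[l] p := by
      exact congrFun (factorial_smul_hasseDeriv (R := ℝ) l) p
    have h3 : ((Nat.factorial l) • (hasseDeriv l p)).eval a = 0 := by rw [hs]; exact hd
    rw [eval_smul, nsmul_eq_mul] at h3
    have hlne : ((Nat.factorial l : ℕ) : ℝ) ≠ 0 := by exact_mod_cast Nat.factorial_ne_zero l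
    exact (mul_eq_zero.mp h3).resolve_left hlne
  -- c = (r+1) * a
  set c := q.coeff r with hc
  have hp' : p = taylor (-a) q := by
    rw [hq, taylor_taylor, neg_add_cancel, taylor_zero']
    rfl
  have hcval : c = (r + 1 : ℝ) * a := by
    have h0 : p.coeff r = (hasseDeriv r q).eval (-a) := by
      rw [hp', taylor_coeff]
    have hdlt : (hasseDeriv r q).natDegree < 2 := by
      have := natDegree_hasseDeriv_le q r
      omega
    rw [eval_eq_sum_range' hdlt] at h0
    simp only [Finset.sum_range_succ, Finset.sum_range_zero, hasseDeriv_coeff] at h0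
    rw [hcoeff] at h0
    simp only [zero_add, Nat.choose_self, pow_zero, pow_one, one_add_one_eq_two] at h0
    rw [show 1 + r = r + 1 from Nat.add_comm 1 r] at h0
    rw [hqtop, Nat.choose_succ_self_right] at h0
    push_cast at h0
    linarith
  -- evaluation identity
  have hev : q.eval (b - a) = q.eval 0 := by
    rw [hq, taylor_eval, taylor_eval, sub_add_cancel, zero_add, heq]
  have hsum : q.eval (b - a) = q.coeff 0 + c * (b - a) ^ r + (b - a) ^ (r + 1) := by
    rw [eval_eq_sum_range (x := b - a)]
    rw [hqdeg]
    have hsub : ({0, r, r + 1} : Finset ℕ) ⊆ Finset.range (r + 1 + 1) := by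
      intro i hi
      simp only [Finset.mem_insert, Finset.mem_singleton] at hi
      simp only [Finset.mem_range]
      omega
    rw [← Finset.sum_subset hsub]
    · have h01 : (0 : ℕ) ∉ ({r, r + 1} : Finset ℕ) := by
        simp only [Finset.mem_insert, Finset.mem_singleton]; omega
      have h12 : r ∉ ({r + 1} : Finset ℕ) := by simp
      rw [Finset.sum_insert h01, Finset.sum_insert h12, Finset.sum_singleton]
      rw [hqtop]
      ring
    · intro i hiR hiN
      simp only [Finset.mem_insert, Finset.mem_singleton, not_or] at hiN
      simp only [Finset.mem_range] at hiR
      rw [hql i (by omega) (by omega)]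
      ring
  have h0q : q.eval 0 = q.coeff 0 := (coeff_zero_eq_eval_zero q).symm
  rw [hev, h0q] at hsum
  have hfac : (b - a) ^ r * (c + (b - a)) = 0 := by
    rw [pow_succ] at hsum
    ring_nf
    ring_nf at hsum
    linarith
  have hbane : b - a ≠ 0 := sub_ne_zero.mpr hba
  have := (mul_eq_zero.mp hfac).resolve_left (pow_ne_zero r hbane)
  rw [hcval] at this
  linarith
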